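/- Let F₂(t) = 1 - e^{-t/2}. For fixed φ ∈ (0, π), the function g(w) = (φ/π)·F₂(w²) + (2/π)·∫_{φ/2}^{π/2} F₂( w²/cos²(θ - φ/2) ) dθ is continuous and strictly increasing on (0, ∞), with g(w) → 0 as w → 0⁺ and g(w) → 1 as w → ∞. Hence for every α ∈ (0,1) there is a unique critical value w with g(w) = 1 - α. -/

import Mathlib

open Set Real Filter Topology

/-- The cdf of the chi-squared distribution with 2 degrees of freedom: `F₂(t) = 1 - e^{-t/2}`. -/
noncomputable def chi2cdf (t : ℝ) : ℝ := 1 - Real.exp (-(t / 2))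

/-- The two-sided coverage probability as a function of the critical value `w`, for a cone
angle `φ`. -/
noncomputable def twoSidedCoverage (φ w : ℝ) : ℝ :=
  (φ / π) * chi2cdf (w ^ 2) +
    (2 / π) * ∫ θ in (φ / 2)..(π / 2), chi2cdf (w ^ 2 / Real.cos (θ - φ / 2) ^ 2)

lemma chi2cdf_lt_one (t : ℝ) : chi2cdf t < 1 := by
  have := Real.exp_pos (-(t / 2)); simp [chi2cdf]; linarith

lemma chi2cdf_nonneg {t : ℝ} (h : 0 ≤ t) : 0 ≤ chi2cdf t := by
  have : Real.exp (-(t / 2)) ≤ 1 := Real.exp_le_one_iff.2 (by linarith)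
  simp [chi2cdf]; linarith

lemma chi2cdf_mono {s t : ℝ} (h : s ≤ t) : chi2cdf s ≤ chi2cdf t := by
  have : Real.exp (-(t / 2)) ≤ Real.exp (-(s / 2)) := Real.exp_le_exp.2 (by linarith)
  simp only [chi2cdf]; linarith

lemma chi2cdf_strictMono {s t : ℝ} (h : s < t) : chi2cdf s < chi2cdf t := by
  have : Real.exp (-(t / 2)) < Real.exp (-(s / 2)) := Real.exp_lt_exp.2 (by linarith)
  simp only [chi2cdf]; linarith

lemma chi2cdf_zero : chi2cdf 0 = 0 := by simp [chi2cdf]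

lemma chi2cdf_continuous : Continuous chi2cdf := by
  unfold chi2cdf; fun_prop

/-- For fixed `φ ∈ (0, π)`, the function
`g(w) = (φ/π)·F₂(w²) + (2/π)·∫_{φ/2}^{π/2} F₂( w²/cos²(θ - φ/2) ) dθ` is continuous and
strictly increasing on `(0, ∞)`, with `g(w) → 0` as `w → 0⁺` and `g(w) → 1` as `w → ∞`.
Hence for every `α ∈ (0,1)` there is a unique critical value `w > 0` with `g(w) = 1 - α`. -/
theorem two_sided_critical_value_exists_unique (φ : ℝ) (hφ : φ ∈ Set.Ioo 0 π) :
    ContinuousOn (twoSidedCoverage φ) (Set.Ioi 0) ∧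
    StrictMonoOn (twoSidedCoverage φ) (Set.Ioi 0) ∧
    Tendsto (twoSidedCoverage φ) (nhdsWithin 0 (Set.Ioi 0)) (nhds 0) ∧
    Tendsto (twoSidedCoverage φ) atTop (nhds 1) ∧
    ∀ α ∈ Set.Ioo (0 : ℝ) 1, ∃! w, w ∈ Set.Ioi (0 : ℝ) ∧ twoSidedCoverage φ w = 1 - α := by
  obtain ⟨hφ0, hφπ⟩ := hφ
  have hπ : (0:ℝ) < π := Real.pi_pos
  set a : ℝ := φ / 2 with ha
  set r : ℝ := π / 2 with hr
  have har : a < r := by simp only [ha, hr]; linarith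
  -- cosine is positive on [a, r]
  have hcos : ∀ θ ∈ Set.Icc a r, 0 < Real.cos (θ - a) := by
    intro θ hθ
    apply Real.cos_pos_of_mem_Ioo
    constructor
    · have := hθ.1; simp only [ha] at *; linarith
    · have := hθ.2; simp only [ha, hr] at *; linarith
  -- the integrand
  set f : ℝ → ℝ → ℝ := fun w θ => chi2cdf (w ^ 2 / Real.cos (θ - a) ^ 2) with hf
  have hg_def : ∀ w, twoSidedCoverage φ w =
      (φ / π) * chi2cdf (w ^ 2) + (2 / π) * ∫ θ in a..r, f w θ := by
    intro w; rfl
  -- integrability of f w on [a, r]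
  have hfint : ∀ w : ℝ, IntervalIntegrable (f w) MeasureTheory.volume a r := by
    intro w
    apply ContinuousOn.intervalIntegrable
    apply chi2cdf_continuous.comp_continuousOn
    apply ContinuousOn.div
    · fun_prop
    · fun_prop
    · intro θ hθ
      rw [Set.uIcc_of_le har.le] at hθ
      exact pow_ne_zero _ (hcos θ hθ).ne'
  -- continuity of the integral in w
  have hI : Continuous fun w => ∫ θ in a..r, f w θ := by
    have heq : ∀ w, (∫ θ in a..r, f w θ) = ∫ θ in Set.Ioc a r, f w θ := fun w =>
      intervalIntegral.integral_of_le har.le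
    simp only [heq]
    apply MeasureTheory.continuous_of_dominated (bound := fun _ => (1:ℝ))
    · intro w
      apply Measurable.aestronglyMeasurable
      apply chi2cdf_continuous.measurable.comp
      apply Measurable.div <;> fun_prop
    · intro w
      filter_upwards with θ
      have h1 : 0 ≤ w ^ 2 / Real.cos (θ - a) ^ 2 := by positivity
      have h2 := chi2cdf_lt_one (w ^ 2 / Real.cos (θ - a) ^ 2)
      have h3 := chi2cdf_nonneg h1
      rw [Real.norm_eq_abs, abs_le]
      constructor <;> simp only [hf] <;> linarith
    · exact MeasureTheory.integrable_const _
    · filter_upwards with θ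
      simp only [hf]
      exact chi2cdf_continuous.comp (by fun_prop)
  have hg : Continuous (twoSidedCoverage φ) := by
    have : twoSidedCoverage φ = fun w =>
        (φ / π) * chi2cdf (w ^ 2) + (2 / π) * ∫ θ in a..r, f w θ := funext hg_def
    rw [this]
    apply Continuous.add
    · exact continuous_const.mul (chi2cdf_continuous.comp (by fun_prop))
    · exact continuous_const.mul hI
  -- strict monotonicity
  have hmono : StrictMonoOn (twoSidedCoverage φ) (Set.Ioi 0) := by
    intro w₁ hw₁ w₂ hw₂ h12
    simp only [Set.mem_Ioi] at hw₁ hw₂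
    rw [hg_def, hg_def]
    have hsq : w₁ ^ 2 < w₂ ^ 2 := by nlinarith
    have h1 : chi2cdf (w₁ ^ 2) < chi2cdf (w₂ ^ 2) := chi2cdf_strictMono hsq
    have h2 : (∫ θ in a..r, f w₁ θ) ≤ ∫ θ in a..r, f w₂ θ := by
      apply intervalIntegral.integral_mono_on har.le (hfint w₁) (hfint w₂)
      intro θ hθ
      apply chi2cdf_mono
      have := hcos θ hθ
      apply div_le_div_of_nonneg_right hsq.le ?_ |>.trans_eq rfl
      positivity
    have hφπ' : 0 < φ / π := by positivity
    have h2π : (0:ℝ) < 2 / π := by positivity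
    nlinarith
  -- limit at 0⁺
  have hg0 : twoSidedCoverage φ 0 = 0 := by
    rw [hg_def]
    simp [hf, chi2cdf_zero]
  have hlim0 : Tendsto (twoSidedCoverage φ) (nhdsWithin 0 (Set.Ioi 0)) (nhds 0) := by
    have h : Tendsto (twoSidedCoverage φ) (nhdsWithin 0 (Set.Ioi 0)) (nhds (twoSidedCoverage φ 0)) :=
      (hg.tendsto 0).mono_left nhdsWithin_le_nhds
    rwa [hg0] at h
  -- bounds: chi2cdf (w^2) ≤ g w ≤ 1
  have hcoef : φ / π + (2 / π) * (r - a) = 1 := by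
    field_simp [hr, ha]; ring
  have hlb : ∀ w : ℝ, chi2cdf (w ^ 2) ≤ twoSidedCoverage φ w := by
    intro w
    rw [hg_def]
    have h2 : (∫ θ in a..r, (fun _ => chi2cdf (w ^ 2)) θ) ≤ ∫ θ in a..r, f w θ := by
      apply intervalIntegral.integral_mono_on har.le (intervalIntegrable_const) (hfint w)
      intro θ hθ
      apply chi2cdf_mono
      have hc := hcos θ hθ
      have hc1 : Real.cos (θ - a) ≤ 1 := Real.cos_le_one _
      have hc2 : Real.cos (θ - a) ^ 2 ≤ 1 := by nlinarith
      rw [le_div_iff₀ (by positivity)]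
      nlinarith [sq_nonneg w]
    rw [intervalIntegral.integral_const, smul_eq_mul] at h2
    have h2π : (0:ℝ) < 2 / π := by positivity
    calc chi2cdf (w ^ 2) = (φ / π + 2 / π * (r - a)) * chi2cdf (w ^ 2) := by rw [hcoef, one_mul]
      _ = φ / π * chi2cdf (w ^ 2) + 2 / π * ((r - a) * chi2cdf (w ^ 2)) := by ring
      _ ≤ φ / π * chi2cdf (w ^ 2) + 2 / π * ∫ θ in a..r, f w θ :=
          add_le_add_right (mul_le_mul_of_nonneg_left h2 h2π.le) _
  have hub : ∀ w : ℝ, twoSidedCoverage φ w ≤ 1 := by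
    intro w
    rw [hg_def]
    have h1 : chi2cdf (w ^ 2) ≤ 1 := (chi2cdf_lt_one _).le
    have h2 : (∫ θ in a..r, f w θ) ≤ ∫ θ in a..r, (fun _ => (1:ℝ)) θ := by
      apply intervalIntegral.integral_mono_on har.le (hfint w) intervalIntegrable_const
      intro θ _
      exact (chi2cdf_lt_one _).le
    rw [intervalIntegral.integral_const, smul_eq_mul, mul_one] at h2
    have hφπ' : 0 < φ / π := by positivity
    have h2π : (0:ℝ) < 2 / π := by positivity
    nlinarith
  -- limit at ∞
  have hchitop : Tendsto (fun w : ℝ => chi2cdf (w ^ 2)) atTop (nhds 1) := by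
    have h1 : Tendsto (fun w : ℝ => w ^ 2) atTop atTop :=
      tendsto_pow_atTop (by norm_num)
    have h2 : Tendsto (fun w : ℝ => -(w ^ 2 / 2)) atTop atBot :=
      tendsto_neg_atTop_atBot.comp (h1.atTop_div_const (by norm_num))
    have h3 : Tendsto (fun w : ℝ => Real.exp (-(w ^ 2 / 2))) atTop (nhds 0) :=
      Real.tendsto_exp_atBot.comp h2
    unfold chi2cdf
    simpa using (tendsto_const_nhds (x := (1:ℝ)) (f := atTop)).sub h3
  have hlimtop : Tendsto (twoSidedCoverage φ) atTop (nhds 1) := by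
    apply tendsto_of_tendsto_of_tendsto_of_le_of_le hchitop tendsto_const_nhds hlb hub
  refine ⟨hg.continuousOn, hmono, hlim0, hlimtop, ?_⟩
  intro α hα
  set y := 1 - α with hy
  have hy0 : 0 < y := by simp [hy]; linarith [hα.2]
  have hy1 : y < 1 := by simp [hy]; linarith [hα.1]
  obtain ⟨w₁, hw₁lt, hw₁pos⟩ :=
    ((hlim0.eventually_lt_const hy0).and self_mem_nhdsWithin).exists
  obtain ⟨w₂, hw₂gt, hw₂big⟩ :=
    ((hlimtop.eventually_const_lt hy1).and (eventually_gt_atTop w₁)).exists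
  have hw₁0 : (0:ℝ) < w₁ := hw₁pos
  have hw₂0 : (0:ℝ) < w₂ := lt_trans hw₁0 hw₂big
  obtain ⟨w, hw, hweq⟩ :=
    intermediate_value_Ioo hw₂big.le (hg.continuousOn (s := Set.Icc w₁ w₂))
      (Set.mem_Ioo.2 ⟨hw₁lt, hw₂gt⟩)
  refine ⟨w, ⟨lt_trans hw₁0 hw.1, hweq⟩, ?_⟩
  rintro w' ⟨hw'pos, hw'eq⟩
  exact hmono.injOn hw'pos (Set.mem_Ioi.2 (lt_trans hw₁0 hw.1)) (by rw [hw'eq, hweq])
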